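/- Let O be a local principal ideal ring with maximal ideal m, A ∈ M_n(O) with cyclic reduction Ā. The evaluation map O[t] → M_n(O), t ↦ A, induces an O-algebra isomorphism O[t]/(χ_A(t)) ≅ O[A], where χ_A is the characteristic polynomial of A. -/

import Mathlib

open IsLocalRing Polynomial

/-- Over the residue field, the powers `M^i`, `i < n`, of a matrix whose minimal polynomial
has degree `n` are linearly independent; here phrased as injectivity of the big matrix. -/
lemma aux_indep {k : Type*} [Field k] (n : ℕ) (M : Matrix (Fin n) (Fin n) k)
    (hdeg : (minpoly k M).degree = n) (d : Fin n → k)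
    (hd : (Matrix.of (fun jk : Fin n × Fin n => fun i : Fin n => (M ^ (i : ℕ)) jk.1 jk.2)).mulVec d = 0) :
    d = 0 := by
  by_contra hne
  set q : Polynomial k := ∑ i : Fin n, Polynomial.monomial (i : ℕ) (d i) with hq
  have hqcoeff : ∀ i : Fin n, q.coeff (i : ℕ) = d i := by
    intro i
    rw [hq, Polynomial.finset_sum_coeff]
    rw [Finset.sum_eq_single i]
    · simp [Polynomial.coeff_monomial]
    · intro j _ hji
      rw [Polynomial.coeff_monomial]
      simp only [ite_eq_right_iff]
      intro h
      exact absurd (Fin.val_injective h) hji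
    · simp
  have hqne : q ≠ 0 := by
    intro h0
    apply hne
    funext i
    rw [← hqcoeff i, h0]
    simp
  have haev : Polynomial.aeval M q = 0 := by
    have hsum : Polynomial.aeval M q = ∑ i : Fin n, d i • M ^ (i : ℕ) := by
      rw [hq, map_sum]
      refine Finset.sum_congr rfl fun i _ => ?_
      rw [Polynomial.aeval_monomial, ← Algebra.smul_def]
    rw [hsum]
    ext a b
    have := congrFun hd (a, b)
    simpa [Matrix.mulVec, dotProduct, Matrix.sum_apply, Matrix.smul_apply,
      smul_eq_mul, mul_comm] using this
  have hqdeg : q.degree < n := by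
    rw [hq]
    apply lt_of_le_of_lt (Polynomial.degree_sum_le _ _)
    rw [Finset.sup_lt_iff]
    · intro i _
      exact lt_of_le_of_lt (Polynomial.degree_monomial_le _ _) (by exact_mod_cast i.2)
    · exact_mod_cast WithBot.bot_lt_coe n
  have := minpoly.degree_le_of_ne_zero k M hqne haev
  rw [hdeg] at this
  exact absurd (lt_of_le_of_lt this hqdeg) (lt_irrefl _)

theorem stmt_13 (O : Type*) [CommRing O] [IsLocalRing O] [IsPrincipalIdealRing O]
    (n : ℕ) (A : Matrix (Fin n) (Fin n) O)
    (hcyc : minpoly (ResidueField O) (A.map (residue O)) =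
      (A.map (residue O)).charpoly) :
    ∃ e : (Polynomial O ⧸ Ideal.span {A.charpoly}) ≃ₐ[O]
        (Polynomial.aeval A : Polynomial O →ₐ[O] Matrix (Fin n) (Fin n) O).range,
      ∀ p : Polynomial O,
        (e (Ideal.Quotient.mk (Ideal.span {A.charpoly}) p) :
          Matrix (Fin n) (Fin n) O) = aeval A p := by
  classical
  set k := ResidueField O
  set M : Matrix (Fin n) (Fin n) k := A.map (residue O) with hM
  -- the key: kernel of evaluation equals the span of the characteristic polynomial
  have hker : Ideal.span {A.charpoly} =
      RingHom.ker (Polynomial.aeval A : Polynomial O →ₐ[O] Matrix (Fin n) (Fin n) O) := by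
    apply le_antisymm
    · rw [Ideal.span_le]
      intro x hx
      simp only [Set.mem_singleton_iff] at hx
      subst hx
      simp only [SetLike.mem_coe, RingHom.mem_ker]
      exact Matrix.aeval_self_charpoly A
    · intro p hp
      rw [RingHom.mem_ker] at hp
      rw [Ideal.mem_span_singleton]
      -- reduce to the remainder
      have hmonic : A.charpoly.Monic := A.charpoly_monic
      rw [← Polynomial.modByMonic_eq_zero_iff_dvd hmonic]
      rcases Nat.eq_zero_or_pos n with hn | hn
      · -- trivial case n = 0
        subst hn
        have : A.charpoly = 1 := by
          have := Matrix.charpoly_monic A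
          have hd : A.charpoly.natDegree = 0 := by
            exact (A.charpoly_natDegree_eq_dim (R := O)).trans (by simp)
          exact Polynomial.Monic.natDegree_eq_zero this |>.mp hd
        rw [this, Polynomial.modByMonic_one]
      · set r := p %ₘ A.charpoly with hr
        have hrdeg : r.degree < A.charpoly.degree := Polynomial.degree_modByMonic_lt p hmonic
      -- the remainder also evaluates to zero
        have hrev : Polynomial.aeval A r = 0 := by
          have : p = r + A.charpoly * (p /ₘ A.charpoly) :=
            (Polynomial.modByMonic_add_div p A.charpoly).symm
          have := congrArg (Polynomial.aeval A) this
          rw [hp] at this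
          simpa [Matrix.aeval_self_charpoly] using this.symm
        have hchardeg : A.charpoly.degree = n := by
          haveI : Nontrivial O := inferInstance
          simpa using Matrix.charpoly_degree_eq_dim A
        have hrnat : r.natDegree < n := by
          rcases eq_or_ne r 0 with h0 | h0
          · simpa [h0] using hn
          · have := Polynomial.natDegree_lt_natDegree h0 (lt_of_lt_of_le hrdeg le_rfl)
            rwa [Polynomial.natDegree_eq_of_degree_eq_some hchardeg] at this
        -- coefficient vector
        set c : Fin n → O := fun i => r.coeff i with hc
        -- the big matrix of powers of A
        set C : Matrix (Fin n × Fin n) (Fin n) O :=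
          Matrix.of (fun jk : Fin n × Fin n => fun i : Fin n => (A ^ (i : ℕ)) jk.1 jk.2) with hC
        have hCc : C.mulVec c = 0 := by
          funext jk
          have hsum : Polynomial.aeval A r = ∑ i ∈ Finset.range n, r.coeff i • A ^ i :=
            Polynomial.aeval_eq_sum_range' hrnat A
          have : (∑ i ∈ Finset.range n, r.coeff i • A ^ i) jk.1 jk.2 = 0 := by
            rw [← hsum, hrev]; rfl
          rw [← Fin.sum_univ_eq_sum_range (fun i => r.coeff i • A ^ i) n] at this
          simpa [hC, Matrix.mulVec, dotProduct, hc, Matrix.sum_apply,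
            Matrix.smul_apply, smul_eq_mul, mul_comm] using this
        -- over the residue field the columns of C are independent; produce a left inverse
        have hdeg : (minpoly k M).degree = n := by
          rw [hcyc]
          haveI : Nontrivial k := inferInstance
          simpa using Matrix.charpoly_degree_eq_dim M
        set Cbar : Matrix (Fin n × Fin n) (Fin n) k :=
          Matrix.of (fun jk : Fin n × Fin n => fun i : Fin n => (M ^ (i : ℕ)) jk.1 jk.2) with hCbar
        have hCmap : C.map (residue O) = Cbar := by
          funext jk i
          have : (A ^ (i : ℕ)).map (residue O) = M ^ (i : ℕ) := by
            rw [hM]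
            exact map_pow (RingHom.mapMatrix (residue O)) A (i : ℕ)
          simp only [Matrix.map_apply, hC, hCbar, Matrix.of_apply]
          rw [← this]
          rfl
        have hinj : LinearMap.ker (Matrix.mulVecLin Cbar) = ⊥ := by
          rw [LinearMap.ker_eq_bot']
          intro d hd
          exact aux_indep n M hdeg d hd
        obtain ⟨g, hg⟩ := LinearMap.exists_leftInverse_of_injective (Matrix.mulVecLin Cbar) hinj
        set Lbar : Matrix (Fin n) (Fin n × Fin n) k := LinearMap.toMatrix' g with hLbar
        have hLC : Lbar * Cbar = 1 := by
          have : LinearMap.toMatrix' (g.comp (Matrix.mulVecLin Cbar)) =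
              LinearMap.toMatrix' (LinearMap.id (R := k) (M := Fin n → k)) := by rw [hg]
          rw [LinearMap.toMatrix'_comp, LinearMap.toMatrix'_id] at this
          rwa [← Matrix.toLin'_apply', LinearMap.toMatrix'_toLin'] at this
        -- lift Lbar to O
        have hres : Function.Surjective (residue O) := Ideal.Quotient.mk_surjective
        set L : Matrix (Fin n) (Fin n × Fin n) O :=
          Matrix.of (fun i jk => (hres (Lbar i jk)).choose) with hL
        have hLmap : L.map (residue O) = Lbar := by
          funext i jk
          exact (hres (Lbar i jk)).choose_spec
        -- the product L * C has unit determinant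
        have hdetmap : residue O ((L * C).det) = 1 := by
          rw [RingHom.map_det, RingHom.mapMatrix_apply]
          rw [Matrix.map_mul, hLmap, hCmap, hLC]
          simp
        have hunit : IsUnit (L * C).det := by
          rw [← IsLocalRing.notMem_maximalIdeal]
          intro hmem
          have : residue O ((L * C).det) = 0 := by
            exact Ideal.Quotient.eq_zero_iff_mem.mpr hmem
          rw [hdetmap] at this
          exact one_ne_zero this
        -- conclude c = 0
        have hLCc : (L * C).mulVec c = 0 := by
          rw [← Matrix.mulVec_mulVec, hCc, Matrix.mulVec_zero]
        haveI := Matrix.invertibleOfIsUnitDet _ hunit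
        have hc0 : c = 0 := by
          have := congrArg (fun v => (⅟(L * C)).mulVec v) hLCc
          simpa [Matrix.mulVec_mulVec] using this
        -- so r = 0
        have : r = 0 := by
          ext i
          rcases lt_or_ge i n with hi | hi
          · have := congrFun hc0 ⟨i, hi⟩
            simpa [hc] using this
          · simp [Polynomial.coeff_eq_zero_of_natDegree_lt (lt_of_lt_of_le hrnat hi)]
        exact this
  refine ⟨(Ideal.quotientEquivAlgOfEq O hker).trans
    (Ideal.quotientKerEquivRange (R := O) (Polynomial.aeval A)), ?_⟩
  intro p
  rfl
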